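/- Let f be a C¹ slice function on an axially symmetric open subset Ω of a hypercomplex subspace M of dimension m+1 (associative case). Then f is slice-regular if and only if ∂̄_B f = ((1-m)/2) f'_s on Ω \ ℝ. -/

import Mathlib

noncomputable section
namespace PaperStmt

variable {A : Type*} [NormedRing A] [NormedAlgebra ℝ A] {m : ℕ}

/-- Partial derivative in the `i`-th coordinate direction. -/
def pd (i : Fin (m + 1)) (f : (Fin (m + 1) → ℝ) → A) : (Fin (m + 1) → ℝ) → A :=
  fun x => fderiv ℝ f x (Pi.single i 1)

/-- The Cauchy–Riemann operator `∂̄_B = (1/2)(∂₀ + ∑ᵢ vᵢ ∂ᵢ)` induced by the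
basis `B = (1, v₁, …, v_m)` (so `v 0 = 1`). -/
def dbar (v : Fin (m + 1) → A) (f : (Fin (m + 1) → ℝ) → A) : (Fin (m + 1) → ℝ) → A :=
  fun x => (2 : ℝ)⁻¹ •
    (pd 0 f x + ∑ i ∈ Finset.univ.erase (0 : Fin (m + 1)), v i * pd i f x)

/-- The conjugated Cauchy–Riemann operator `∂_B = (1/2)(∂₀ - ∑ᵢ vᵢ ∂ᵢ)`. -/
def dconj (v : Fin (m + 1) → A) (f : (Fin (m + 1) → ℝ) → A) : (Fin (m + 1) → ℝ) → A :=
  fun x => (2 : ℝ)⁻¹ •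
    (pd 0 f x - ∑ i ∈ Finset.univ.erase (0 : Fin (m + 1)), v i * pd i f x)

/-- The Laplacian `Δ_B = ∑ᵢ ∂ᵢ²` of `M ≅ ℝ^{m+1}`. -/
def lap (f : (Fin (m + 1) → ℝ) → A) : (Fin (m + 1) → ℝ) → A :=
  fun x => ∑ i : Fin (m + 1), pd i (pd i f) x

/-- The norm `β = ‖Im x‖` of the imaginary part of the point with
coordinates `x`. -/
def nIm (x : Fin (m + 1) → ℝ) : ℝ :=
  Real.sqrt (∑ i ∈ Finset.univ.erase (0 : Fin (m + 1)), (x i) ^ 2)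

/-- The point `α + iβ` of the complex half-plane corresponding to `x`. -/
def zeta (x : Fin (m + 1) → ℝ) : ℂ := ⟨x 0, nIm x⟩

/-- The imaginary part `Im(x) = ∑_{i=1}^m xᵢ vᵢ` of the point of `M` with
coordinates `x`. -/
def imv (v : Fin (m + 1) → A) (x : Fin (m + 1) → ℝ) : A :=
  ∑ i ∈ Finset.univ.erase (0 : Fin (m + 1)), x i • v i

/-- The point of `M` with coordinates `x` w.r.t. the basis `(1, v₁, …, v_m)`. -/
def iot (v : Fin (m + 1) → A) (x : Fin (m + 1) → ℝ) : A :=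
  ∑ i : Fin (m + 1), x i • v i

/-- The slice function `I(F₁ + √-1 F₂)` induced on (the coordinates of) `M` by
the stem function with components `F₁, F₂`:
`f(α + Jβ) = F₁(α+iβ) + J F₂(α+iβ)` with `β = ‖Im x‖ ≥ 0`, `J = Im(x)/β`. -/
def sfun (v : Fin (m + 1) → A) (F₁ F₂ : ℂ → A) : (Fin (m + 1) → ℝ) → A :=
  fun x => F₁ (zeta x) + imv v x * ((nIm x)⁻¹ • F₂ (zeta x))

/-- The spherical derivative `f'ₛ(x) = β⁻¹ F₂(α+iβ)` of the slice function
induced by the stem components `(F₁, F₂)`. -/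
def sder (F₂ : ℂ → A) : (Fin (m + 1) → ℝ) → A :=
  fun x => (nIm x)⁻¹ • F₂ (zeta x)

/-- Real partial derivative of a stem component along `1 ∈ ℂ`. -/
def d1 (F : ℂ → A) (z : ℂ) : A := fderiv ℝ F z 1

/-- Real partial derivative of a stem component along `i ∈ ℂ`. -/
def dI (F : ℂ → A) (z : ℂ) : A := fderiv ℝ F z Complex.I

/-- The tangential operator `L_{ij} = xᵢ ∂ⱼ - xⱼ ∂ᵢ`. -/
def Lop (i j : Fin (m + 1)) (f : (Fin (m + 1) → ℝ) → A) : (Fin (m + 1) → ℝ) → A :=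
  fun x => x i • pd j f x - x j • pd i f x

/-- The spherical Dirac operator `Γ_B = -(1/2) ∑_{i,j=1}^m vᵢ (vⱼ L_{ij})`. -/
def Gam (v : Fin (m + 1) → A) (f : (Fin (m + 1) → ℝ) → A) : (Fin (m + 1) → ℝ) → A :=
  fun x => -((2 : ℝ)⁻¹ •
    ∑ i ∈ Finset.univ.erase (0 : Fin (m + 1)),
      ∑ j ∈ Finset.univ.erase (0 : Fin (m + 1)), v i * (v j * Lop i j f x))


abbrev P (i : Fin (m+1)) : (Fin (m+1) → ℝ) →L[ℝ] ℝ := ContinuousLinearMap.proj i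

abbrev Lb (x : Fin (m+1) → ℝ) : (Fin (m+1) → ℝ) →L[ℝ] ℝ :=
  (nIm x)⁻¹ • ∑ i ∈ Finset.univ.erase (0 : Fin (m+1)), x i • P i

lemma nIm_nonneg (x : Fin (m+1) → ℝ) : 0 ≤ nIm x := Real.sqrt_nonneg _

lemma sq_nIm (x : Fin (m+1) → ℝ) :
    nIm x ^ 2 = ∑ i ∈ Finset.univ.erase (0 : Fin (m + 1)), (x i) ^ 2 :=
  Real.sq_sqrt (Finset.sum_nonneg fun i _ => sq_nonneg _)

lemma hasFDerivAt_nIm (x : Fin (m+1) → ℝ) (hx : nIm x ≠ 0) :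
    HasFDerivAt nIm (Lb x) x := by
  have hq : HasFDerivAt (fun y : Fin (m+1) → ℝ =>
      ∑ i ∈ Finset.univ.erase (0 : Fin (m+1)), (y i)^2)
      (∑ i ∈ Finset.univ.erase (0 : Fin (m+1)), (2 * x i) • P i) x := by
    apply HasFDerivAt.fun_sum
    intro i _
    have h1 : HasFDerivAt (fun y : Fin (m+1) → ℝ => y i) (P i) x :=
      (P i).hasFDerivAt
    have := h1.mul h1
    have h2 : HasFDerivAt (fun y : Fin (m+1) → ℝ => y i * y i)
        ((2 * x i) • P i) x := by
      rw [two_mul, add_smul]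
      exact this
    simpa [sq] using h2
  have hne : (∑ i ∈ Finset.univ.erase (0 : Fin (m+1)), (x i)^2) ≠ 0 := by
    intro h
    apply hx
    simp [nIm, h]
  have := hq.sqrt hne
  have hs : Real.sqrt (∑ i ∈ Finset.univ.erase (0 : Fin (m+1)), (x i)^2) = nIm x := rfl
  rw [hs] at this
  have heq2 : ((1 / (2 * nIm x)) • ∑ i ∈ Finset.univ.erase (0 : Fin (m+1)), (2 * x i) • P i)
      = Lb x := by
    have hLb : Lb x = ∑ i ∈ Finset.univ.erase (0 : Fin (m+1)), (nIm x)⁻¹ • (x i • P i) :=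
      Finset.smul_sum
    rw [Finset.smul_sum, hLb]
    refine Finset.sum_congr rfl fun i _ => ?_
    rw [smul_smul, smul_smul]
    congr 1
    field_simp
  rw [← heq2]
  exact this

lemma eval_nIm_deriv (x : Fin (m+1) → ℝ) (j : Fin (m+1)) :
    (Lb x) (Pi.single j 1) = if j = 0 then 0 else (nIm x)⁻¹ * x j := by
  simp only [ContinuousLinearMap.smul_apply, ContinuousLinearMap.sum_apply,
    ContinuousLinearMap.proj_apply, Pi.single_apply]
  by_cases hj : j = 0
  · subst hj; simp
  · simp only [smul_eq_mul]
    rw [Finset.sum_eq_single j]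
    · simp [hj]
    · intro b _ hbj; simp [hbj]
    · intro h; simp [hj] at h


lemma zeta_eq (y : Fin (m+1) → ℝ) : zeta y = ((y 0 : ℝ) : ℂ) + nIm y • Complex.I := by
  apply Complex.ext <;> simp [zeta, Complex.real_smul]

lemma hasFDerivAt_zeta (x : Fin (m+1) → ℝ) (hx : nIm x ≠ 0) :
    HasFDerivAt zeta (Complex.ofRealCLM.comp (P 0) + (Lb x).smulRight Complex.I) x := by
  have h1 : HasFDerivAt (fun y : Fin (m+1) → ℝ => ((y 0 : ℝ) : ℂ))
      (Complex.ofRealCLM.comp (P 0)) x := (Complex.ofRealCLM.comp (P 0)).hasFDerivAt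
  have h2 := (hasFDerivAt_nIm x hx).smul_const Complex.I
  have hfun : (zeta : (Fin (m+1) → ℝ) → ℂ) = fun y => ((y 0 : ℝ) : ℂ) + nIm y • Complex.I :=
    funext zeta_eq
  rw [hfun]
  exact h1.add h2


lemma imv_sq (v : Fin (m+1) → A)
    (hsq : ∀ i : Fin (m+1), i ≠ 0 → v i * v i = -1)
    (hanti : ∀ i j : Fin (m+1), i ≠ 0 → j ≠ 0 → i ≠ j → v i * v j = -(v j * v i))
    (x : Fin (m+1) → ℝ) :
    imv v x * imv v x = (-(nIm x ^ 2)) • (1 : A) := by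
  classical
  set E := Finset.univ.erase (0 : Fin (m+1)) with hE
  have hT : imv v x * imv v x
      = ∑ i ∈ E, ∑ j ∈ E, (x i * x j) • (v i * v j) := by
    simp only [imv, ← hE]
    rw [Finset.sum_mul_sum]
    refine Finset.sum_congr rfl fun i _ => Finset.sum_congr rfl fun j _ => ?_
    rw [smul_mul_assoc, mul_smul_comm, smul_smul]
  have hsplit : ∀ i ∈ E, ∑ j ∈ E, (x i * x j) • (v i * v j)
      = (x i * x i) • (v i * v i) + ∑ j ∈ E.erase i, (x i * x j) • (v i * v j) :=
    fun i hi => (Finset.add_sum_erase E _ hi).symm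
  rw [hT, Finset.sum_congr rfl hsplit, Finset.sum_add_distrib]
  have hO : ∑ i ∈ E, ∑ j ∈ E.erase i, (x i * x j) • (v i * v j) = 0 := by
    set O := ∑ i ∈ E, ∑ j ∈ E.erase i, (x i * x j) • (v i * v j) with hOdef
    have hswap : O = ∑ j ∈ E, ∑ i ∈ E.erase j, (x i * x j) • (v i * v j) := by
      rw [hOdef]
      refine Finset.sum_comm' ?_
      intro i j
      simp only [Finset.mem_erase, E, Finset.mem_univ, and_true]
      tauto
    have hneg : O = -O := by
      conv_lhs => rw [hswap]
      rw [← Finset.sum_neg_distrib]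
      refine Finset.sum_congr rfl fun j hj => ?_
      rw [← Finset.sum_neg_distrib]
      refine Finset.sum_congr rfl fun i hi => ?_
      have hj0 : j ≠ 0 := (Finset.mem_erase.mp hj).1
      have hi0 : i ≠ 0 := by
        have := (Finset.mem_erase.mp hi).2
        have : i ∈ E := (Finset.mem_erase.mp hi).2
        exact (Finset.mem_erase.mp this).1
      have hij : i ≠ j := (Finset.mem_erase.mp hi).1
      rw [hanti i j hi0 hj0 hij, smul_neg, mul_comm (x i)]
    have h2 : (2:ℝ) • O = 0 := by
      rw [two_smul]
      nth_rewrite 2 [hneg]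
      exact add_neg_cancel O
    have : O = (2:ℝ)⁻¹ • ((2:ℝ) • O) := by rw [smul_smul]; norm_num
    rw [this, h2, smul_zero]
  rw [hO, add_zero]
  have hsum : ∑ i ∈ E, (x i * x i) • (v i * v i) = (∑ i ∈ E, (x i)^2) • (-1 : A) := by
    rw [Finset.sum_smul]
    refine Finset.sum_congr rfl fun i hi => ?_
    rw [hsq i (Finset.mem_erase.mp hi).1, sq]
  rw [hsum, ← sq_nIm]
  module

lemma key (v : Fin (m+1) → A)
    (hsq : ∀ i : Fin (m+1), i ≠ 0 → v i * v i = -1)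
    (hanti : ∀ i j : Fin (m+1), i ≠ 0 → j ≠ 0 → i ≠ j → v i * v j = -(v j * v i))
    (F₁ F₂ : ℂ → A) (x : Fin (m+1) → ℝ) (hx : nIm x ≠ 0)
    (hd1 : DifferentiableAt ℝ F₁ (zeta x)) (hd2 : DifferentiableAt ℝ F₂ (zeta x)) :
    dbar v (sfun v F₁ F₂) x =
      (2:ℝ)⁻¹ • ((d1 F₁ (zeta x) - dI F₂ (zeta x))
        + imv v x * ((nIm x)⁻¹ • (dI F₁ (zeta x) + d1 F₂ (zeta x))))
      + (((1:ℝ) - (m:ℝ))/2) • sder F₂ x := by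
  classical
  set z := zeta x with hzdef
  set β := nIm x with hbdef
  set Lz : (Fin (m+1) → ℝ) →L[ℝ] ℂ :=
    Complex.ofRealCLM.comp (P 0) + (Lb x).smulRight Complex.I with hLzdef
  have hzeta : HasFDerivAt zeta Lz x := hasFDerivAt_zeta x hx
  have h1 : HasFDerivAt (fun y => F₁ (zeta y)) ((fderiv ℝ F₁ z).comp Lz) x :=
    hd1.hasFDerivAt.comp x hzeta
  have h2 : HasFDerivAt (fun y => F₂ (zeta y)) ((fderiv ℝ F₂ z).comp Lz) x :=
    hd2.hasFDerivAt.comp x hzeta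
  set Limv : (Fin (m+1) → ℝ) →L[ℝ] A :=
    ∑ i ∈ Finset.univ.erase (0 : Fin (m+1)), (P i).smulRight (v i) with hLimvdef
  have himv : HasFDerivAt (imv v) Limv x := by
    have hfun : (imv v : (Fin (m+1) → ℝ) → A) = ⇑Limv := by
      funext y
      simp [imv, hLimvdef]
    rw [hfun]; exact Limv.hasFDerivAt
  have hinv : HasFDerivAt (fun y => (nIm y)⁻¹) ((-(β^2)⁻¹) • Lb x) x :=
    (hasDerivAt_inv hx).comp_hasFDerivAt x (hasFDerivAt_nIm x hx)
  set Lg : (Fin (m+1) → ℝ) →L[ℝ] A :=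
    β⁻¹ • ((fderiv ℝ F₂ z).comp Lz) + ((-(β^2)⁻¹) • Lb x).smulRight (F₂ z) with hLgdef
  have hg : HasFDerivAt (sder F₂) Lg x := hinv.smul h2
  have hprod : HasFDerivAt (fun y => imv v y * sder F₂ y)
      (imv v x • Lg + Limv.smulRight (sder F₂ x)) x := himv.mul' hg
  have hf : HasFDerivAt (sfun v F₁ F₂)
      ((fderiv ℝ F₁ z).comp Lz + (imv v x • Lg + Limv.smulRight (sder F₂ x))) x :=
    h1.add hprod
  have hpd : ∀ j, pd j (sfun v F₁ F₂) x =
      fderiv ℝ F₁ z (Lz (Pi.single j 1)) +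
        (imv v x * (Lg (Pi.single j 1)) + Limv (Pi.single j 1) * sder F₂ x) := by
    intro j
    show fderiv ℝ (sfun v F₁ F₂) x (Pi.single j 1) = _
    rw [hf.fderiv]
    simp only [ContinuousLinearMap.add_apply, ContinuousLinearMap.coe_comp',
      Function.comp_apply, ContinuousLinearMap.smul_apply,
      ContinuousLinearMap.smulRight_apply, smul_eq_mul]
  -- evaluations
  have hLb0 : (Lb x) (Pi.single 0 1) = 0 := by rw [eval_nIm_deriv]; simp
  have hLbj : ∀ j : Fin (m+1), j ≠ 0 → (Lb x) (Pi.single j 1) = β⁻¹ * x j := by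
    intro j hj; rw [eval_nIm_deriv]; simp [hj, hbdef]
  have hLz0 : Lz (Pi.single 0 1) = 1 := by
    simp [hLzdef, ContinuousLinearMap.smulRight_apply, hLb0]
  have hLzj : ∀ j : Fin (m+1), j ≠ 0 → Lz (Pi.single j 1) = (β⁻¹ * x j) • Complex.I := by
    intro j hj
    simp [hLzdef, ContinuousLinearMap.smulRight_apply, hLbj j hj,
      Pi.single_eq_of_ne (Ne.symm hj)]
  have hLimv0 : Limv (Pi.single 0 1) = 0 := by
    simp only [hLimvdef, ContinuousLinearMap.sum_apply, ContinuousLinearMap.smulRight_apply,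
      ContinuousLinearMap.proj_apply]
    refine Finset.sum_eq_zero fun i hi => ?_
    rw [Pi.single_eq_of_ne (Finset.mem_erase.mp hi).1, zero_smul]
  have hLimvj : ∀ j : Fin (m+1), j ≠ 0 → Limv (Pi.single j 1) = v j := by
    intro j hj
    simp only [hLimvdef, ContinuousLinearMap.sum_apply, ContinuousLinearMap.smulRight_apply,
      ContinuousLinearMap.proj_apply]
    rw [Finset.sum_eq_single j]
    · simp
    · intro b _ hbj; rw [Pi.single_eq_of_ne hbj, zero_smul]
    · intro h; exact absurd (Finset.mem_erase.mpr ⟨hj, Finset.mem_univ j⟩) h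
  -- pd 0
  have hpd0 : pd 0 (sfun v F₁ F₂) x = d1 F₁ z + imv v x * (β⁻¹ • d1 F₂ z) := by
    rw [hpd 0, hLz0, hLimv0, zero_mul, add_zero]
    congr 1
    simp only [hLgdef, ContinuousLinearMap.add_apply, ContinuousLinearMap.smul_apply,
      ContinuousLinearMap.coe_comp', Function.comp_apply,
      ContinuousLinearMap.smulRight_apply, hLz0, hLb0]
    rw [smul_zero, zero_smul, add_zero]
    rfl
  -- pd j for j ≠ 0
  set c : A := (β⁻¹*β⁻¹) • dI F₂ z + (-(β^2)⁻¹*β⁻¹) • F₂ z with hcdef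
  set W : A := β⁻¹ • dI F₁ z + imv v x * c with hWdef
  have hpdj : ∀ j : Fin (m+1), j ≠ 0 →
      pd j (sfun v F₁ F₂) x = x j • W + v j * sder F₂ x := by
    intro j hj
    rw [hpd j, hLimvj j hj, hLzj j hj]
    have e2 : Lg ((Pi.single j 1 : Fin (m+1) → ℝ)) = x j • c := by
      simp only [hLgdef, ContinuousLinearMap.add_apply, ContinuousLinearMap.smul_apply,
        ContinuousLinearMap.coe_comp', Function.comp_apply,
        ContinuousLinearMap.smulRight_apply, hLzj j hj, hLbj j hj, map_smul, hcdef, dI]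
      match_scalars <;> field_simp <;> rw [smul_eq_mul] <;> field_simp
    rw [e2, map_smul, mul_smul_comm, hWdef]
    show (β⁻¹ * x j) • dI F₁ z + (x j • (imv v x * c) + v j * sder F₂ x) = _
    module
  -- sum over E
  have hcard : (Finset.univ.erase (0 : Fin (m+1))).card = m := by
    rw [Finset.card_erase_of_mem (Finset.mem_univ _), Finset.card_univ, Fintype.card_fin]
    omega
  have hsum : ∑ j ∈ Finset.univ.erase (0 : Fin (m+1)), v j * pd j (sfun v F₁ F₂) x
      = imv v x * W + (m:ℝ) • (-(sder F₂ x)) := by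
    have hterm : ∀ j ∈ Finset.univ.erase (0 : Fin (m+1)),
        v j * pd j (sfun v F₁ F₂) x = (x j • v j) * W + (-(sder F₂ x)) := by
      intro j hj
      have hj0 := (Finset.mem_erase.mp hj).1
      rw [hpdj j hj0, mul_add, mul_smul_comm, ← mul_assoc, hsq j hj0,
        neg_one_mul, smul_mul_assoc]
    rw [Finset.sum_congr rfl hterm, Finset.sum_add_distrib, ← Finset.sum_mul,
      Finset.sum_const, hcard, ← imv]
    congr 1
    rw [← Nat.cast_smul_eq_nsmul ℝ]
  have himv2 : imv v x * W = imv v x * (β⁻¹ • dI F₁ z) + (-(dI F₂ z) + β⁻¹ • F₂ z) := by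
    rw [hWdef, mul_add]
    congr 1
    rw [← mul_assoc, imv_sq v hsq hanti x, ← hbdef, smul_mul_assoc, one_mul, hcdef]
    have hβ2 : β^2 ≠ 0 := pow_ne_zero 2 hx
    match_scalars <;> (field_simp; try ring)
  -- assemble
  have hmul : imv v x * (β⁻¹ • (dI F₁ z + d1 F₂ z))
      = imv v x * (β⁻¹ • d1 F₂ z) + imv v x * (β⁻¹ • dI F₁ z) := by
    rw [← mul_add, smul_add, add_comm]
  show (2:ℝ)⁻¹ • (pd 0 (sfun v F₁ F₂) x
      + ∑ j ∈ Finset.univ.erase (0 : Fin (m+1)), v j * pd j (sfun v F₁ F₂) x) = _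
  rw [hsum, hpd0, himv2]
  have hsder : sder F₂ x = β⁻¹ • F₂ z := rfl
  rw [hsder, hmul]
  module

lemma conj_transfer (G : ℂ → A) (ε : ℝ) (w : ℂ)
    (hGw : DifferentiableAt ℝ G w) (hGc : DifferentiableAt ℝ G ((starRingEnd ℂ) w))
    (heq : ∀ᶠ u in nhds w, G ((starRingEnd ℂ) u) = ε • G u) :
    ε • fderiv ℝ G w = (fderiv ℝ G ((starRingEnd ℂ) w)).comp
      (Complex.conjCLE.toContinuousLinearMap) := by
  have h0 : HasFDerivAt (fun u : ℂ => (starRingEnd ℂ) u)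
      Complex.conjCLE.toContinuousLinearMap w := Complex.conjCLE.hasFDerivAt
  have hc : HasFDerivAt (fun u : ℂ => G ((starRingEnd ℂ) u))
      ((fderiv ℝ G ((starRingEnd ℂ) w)).comp Complex.conjCLE.toContinuousLinearMap) w :=
    hGc.hasFDerivAt.comp w h0
  have hc2 : HasFDerivAt (fun u : ℂ => ε • G u)
      ((fderiv ℝ G ((starRingEnd ℂ) w)).comp Complex.conjCLE.toContinuousLinearMap) w :=
    hc.congr_of_eventuallyEq (heq.mono fun u hu => hu.symm)
  have hc3 : HasFDerivAt (fun u : ℂ => ε • G u) (ε • fderiv ℝ G w) w :=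
    hGw.hasFDerivAt.const_smul ε
  exact hc3.unique hc2


/-- **Characterization of slice-regularity via the Cauchy–Riemann operator.**
Let `f` be a `C¹` slice function, induced by the stem components `(F₁, F₂)`
on the axially symmetric open subset `Ω = {x : ζ(x) ∈ D}` of a hypercomplex
subspace `M` of dimension `m+1` (associative case).  Then `f` is slice-regular
(i.e. the stem function `F₁ + √-1 F₂` is holomorphic) if and only if
`∂̄_B f = ((1-m)/2) f'ₛ` on `Ω \ ℝ`. -/
theorem sliceRegular_iff_dbar_eq_sphericalDerivative
    (hm : 2 ≤ m)
    (v : Fin (m + 1) → A) (hv0 : v 0 = 1)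
    (hsq : ∀ i : Fin (m + 1), i ≠ 0 → v i * v i = -1)
    (hanti : ∀ i j : Fin (m + 1), i ≠ 0 → j ≠ 0 → i ≠ j → v i * v j = -(v j * v i))
    (D : Set ℂ) (hD : IsOpen D) (hDsym : ∀ z ∈ D, (starRingEnd ℂ) z ∈ D)
    (F₁ F₂ : ℂ → A)
    (hs1 : ∀ z ∈ D, F₁ ((starRingEnd ℂ) z) = F₁ z)
    (hs2 : ∀ z ∈ D, F₂ ((starRingEnd ℂ) z) = -F₂ z)
    (hF1 : ContDiffOn ℝ 1 F₁ D) (hF2 : ContDiffOn ℝ 1 F₂ D) :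
    (∀ z ∈ D, d1 F₁ z = dI F₂ z ∧ dI F₁ z = -(d1 F₂ z)) ↔
      (∀ x : Fin (m + 1) → ℝ, zeta x ∈ D → nIm x ≠ 0 →
        dbar v (sfun v F₁ F₂) x = (((1 : ℝ) - m) / 2) • sder F₂ x) := by
  classical
  have hdiff1 : ∀ z ∈ D, DifferentiableAt ℝ F₁ z := fun z hz =>
    ((hF1.differentiableOn one_ne_zero) z hz).differentiableAt (hD.mem_nhds hz)
  have hdiff2 : ∀ z ∈ D, DifferentiableAt ℝ F₂ z := fun z hz =>
    ((hF2.differentiableOn one_ne_zero) z hz).differentiableAt (hD.mem_nhds hz)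
  constructor
  · intro hCR x hzx hnx
    rw [key v hsq hanti F₁ F₂ x hnx (hdiff1 _ hzx) (hdiff2 _ hzx)]
    obtain ⟨e1, e2⟩ := hCR _ hzx
    rw [e1, e2]
    simp
  · intro h z hzD
    -- Step 1: upper half-plane points
    have step : ∀ w ∈ D, 0 < w.im → (d1 F₁ w = dI F₂ w ∧ dI F₁ w = -(d1 F₂ w)) := by
      intro w hw him
      have mk : ∀ k : Fin (m+1), k ≠ 0 →
          (d1 F₁ w - dI F₂ w) + v k * (dI F₁ w + d1 F₂ w) = 0 := by
        intro k hk
        set x : Fin (m+1) → ℝ :=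
          fun i => if i = 0 then w.re else if i = k then w.im else 0 with hxdef
        have hx0 : x 0 = w.re := by simp [hxdef]
        have hsumx : ∑ i ∈ Finset.univ.erase (0 : Fin (m+1)), (x i)^2 = w.im ^ 2 := by
          rw [Finset.sum_eq_single_of_mem k (Finset.mem_erase.mpr ⟨hk, Finset.mem_univ k⟩)
            (fun b hb hbk => by simp [hxdef, hbk, (Finset.mem_erase.mp hb).1])]
          simp [hxdef, hk]
        have hnx : nIm x = w.im := by
          rw [nIm, hsumx, Real.sqrt_sq him.le]
        have hzx : zeta x = w := by
          rw [zeta, hnx, hx0]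
        have himvx : imv v x = w.im • v k := by
          rw [imv, Finset.sum_eq_single_of_mem k (Finset.mem_erase.mpr ⟨hk, Finset.mem_univ k⟩)
            (fun b hb hbk => by simp [hxdef, hbk, (Finset.mem_erase.mp hb).1])]
          simp [hxdef, hk]
        have hnx0 : nIm x ≠ 0 := by rw [hnx]; exact ne_of_gt him
        have heq := h x (by rw [hzx]; exact hw) hnx0
        rw [key v hsq hanti F₁ F₂ x hnx0 (by rw [hzx]; exact hdiff1 _ hw)
          (by rw [hzx]; exact hdiff2 _ hw), hzx] at heq
        have h0 : (2:ℝ)⁻¹ • ((d1 F₁ w - dI F₂ w)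
            + imv v x * ((nIm x)⁻¹ • (dI F₁ w + d1 F₂ w))) = 0 := by
          exact add_eq_right.mp heq
        have h1 : (d1 F₁ w - dI F₂ w)
            + imv v x * ((nIm x)⁻¹ • (dI F₁ w + d1 F₂ w)) = 0 := by
          have h2 := congrArg (fun t => (2:ℝ) • t) h0
          simpa [smul_smul] using h2
        rw [himvx, hnx, smul_mul_assoc, mul_smul_comm, smul_smul,
          mul_inv_cancel₀ (ne_of_gt him), one_smul] at h1
        exact h1
      set k₁ : Fin (m+1) := ⟨1, by omega⟩ with hk1
      set k₂ : Fin (m+1) := ⟨2, by omega⟩ with hk2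
      have hk10 : k₁ ≠ 0 := by simp [hk1, Fin.ext_iff]
      have hk20 : k₂ ≠ 0 := by simp [hk2, Fin.ext_iff]
      have hk12 : k₁ ≠ k₂ := by simp [hk1, hk2, Fin.ext_iff]
      have e1 := mk k₁ hk10
      have e2 := mk k₂ hk20
      set B := dI F₁ w + d1 F₂ w with hB
      have hvB : v k₁ * B = v k₂ * B := add_left_cancel (e1.trans e2.symm)
      have hBzero : B = 0 := by
        have t1 := congrArg (fun t => v k₁ * t) hvB
        have t2 := congrArg (fun t => v k₂ * t) hvB
        simp only [← mul_assoc] at t1 t2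
        rw [hsq k₁ hk10, neg_one_mul] at t1
        rw [hsq k₂ hk20, neg_one_mul] at t2
        -- t1 : -B = (v k₁ * v k₂) * B ; t2 : (v k₂ * v k₁) * B = -B
        rw [hanti k₁ k₂ hk10 hk20 hk12, neg_mul, t2, neg_neg] at t1
        -- t1 : -B = B
        have h2 : (2:ℝ) • B = 0 := by
          rw [two_smul]
          nth_rewrite 1 [← t1]
          exact neg_add_cancel B
        have h3 : B = (2:ℝ)⁻¹ • ((2:ℝ) • B) := by rw [smul_smul]; norm_num
        rw [h3, h2, smul_zero]
      have hAzero : d1 F₁ w - dI F₂ w = 0 := by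
        rw [hBzero, mul_zero, add_zero] at e1
        exact e1
      exact ⟨sub_eq_zero.mp hAzero, eq_neg_of_add_eq_zero_left hBzero⟩
    -- Step 2: all non-real points, via conjugation symmetry
    have step2 : ∀ w ∈ D, w.im ≠ 0 → (d1 F₁ w = dI F₂ w ∧ dI F₁ w = -(d1 F₂ w)) := by
      intro w hw him
      rcases him.lt_or_gt with hlt | hgt
      · -- lower half-plane: transfer from conjugate
        set wc := (starRingEnd ℂ) w with hwc
        have hwcD : wc ∈ D := hDsym w hw
        have hwcim : 0 < wc.im := by
          rw [hwc, Complex.conj_im]; linarith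
        obtain ⟨c1, c2⟩ := step wc hwcD hwcim
        have t1 := conj_transfer F₁ 1 w (hdiff1 w hw) (hdiff1 wc hwcD)
          (Filter.eventually_of_mem (hD.mem_nhds hw) (fun u hu => by
            rw [hs1 u hu, one_smul]))
        have t2 := conj_transfer F₂ (-1) w (hdiff2 w hw) (hdiff2 wc hwcD)
          (Filter.eventually_of_mem (hD.mem_nhds hw) (fun u hu => by
            rw [hs2 u hu, neg_one_smul]))
        rw [one_smul] at t1
        have e11 : d1 F₁ w = d1 F₁ wc := by
          rw [d1, d1, t1]
          simp [hwc]
        have e1I : dI F₁ w = -(dI F₁ wc) := by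
          rw [dI, dI, t1]
          simp [Complex.conjCLE_apply, hwc]
        have e21 : -(d1 F₂ w) = d1 F₂ wc := by
          have h := congrArg (fun L : ℂ →L[ℝ] A => L 1) t2
          simpa [d1, Complex.conjCLE_apply] using h
        have e2I' : dI F₂ w = dI F₂ wc := by
          have h := congrArg (fun L : ℂ →L[ℝ] A => L Complex.I) t2
          simp only [dI] at *
          simp [Complex.conjCLE_apply, Complex.conj_I] at h
          simpa [dI] using h
        constructor
        · rw [e11, c1, ← e2I']
        · rw [e1I, c2, neg_neg, ← e21]
      · exact step w hw hgt
    -- Step 3: real points by continuity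
    by_cases him : z.im = 0
    · have hcont1 : ContinuousOn (fun u => fderiv ℝ F₁ u) D :=
        hF1.continuousOn_fderiv_of_isOpen hD le_rfl
      have hcont2 : ContinuousOn (fun u => fderiv ℝ F₂ u) D :=
        hF2.continuousOn_fderiv_of_isOpen hD le_rfl
      have hev : ∀ c : ℂ, ∀ F : ℂ → A, ContinuousOn (fun u => fderiv ℝ F u) D →
          ContinuousOn (fun u => fderiv ℝ F u c) D := by
        intro c F hF
        exact (ContinuousLinearMap.apply ℝ A c).continuous.comp_continuousOn hF
      have hgA : ContinuousOn (fun u => d1 F₁ u - dI F₂ u) D :=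
        (hev 1 F₁ hcont1).sub (hev Complex.I F₂ hcont2)
      have hgB : ContinuousOn (fun u => dI F₁ u + d1 F₂ u) D :=
        (hev Complex.I F₁ hcont1).add (hev 1 F₂ hcont2)
      set path : ℝ → ℂ := fun t => z + t • Complex.I with hpathdef
      have hcp : Continuous path := by
        apply Continuous.add continuous_const
        exact (continuous_id.smul continuous_const)
      have hpath : Filter.Tendsto path (nhdsWithin 0 (Set.Ioi (0:ℝ))) (nhds z) := by
        have h0 : Filter.Tendsto path (nhds 0) (nhds (path 0)) := hcp.tendsto 0
        have h1 : path 0 = z := by simp [hpathdef]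
        rw [h1] at h0
        exact h0.mono_left nhdsWithin_le_nhds
      have hmemD : ∀ᶠ t in nhdsWithin 0 (Set.Ioi (0:ℝ)), path t ∈ D :=
        hpath.eventually_mem (hD.mem_nhds hzD)
      have himt : ∀ᶠ t in nhdsWithin 0 (Set.Ioi (0:ℝ)), (path t).im ≠ 0 := by
        filter_upwards [self_mem_nhdsWithin] with t ht
        have : (path t).im = t := by
          simp [hpathdef, him, Complex.add_im, Complex.smul_im]
        rw [this]
        exact ne_of_gt ht
      have hg0 : ∀ᶠ t in nhdsWithin 0 (Set.Ioi (0:ℝ)),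
          (d1 F₁ (path t) - dI F₂ (path t) = 0 ∧ dI F₁ (path t) + d1 F₂ (path t) = 0) := by
        filter_upwards [hmemD, himt] with t htD htim
        obtain ⟨u1, u2⟩ := step2 (path t) htD htim
        constructor
        · rw [u1, sub_self]
        · rw [u2, neg_add_cancel]
      have htendA : Filter.Tendsto (fun t => d1 F₁ (path t) - dI F₂ (path t))
          (nhdsWithin 0 (Set.Ioi (0:ℝ))) (nhds (d1 F₁ z - dI F₂ z)) :=
        ((hgA.continuousAt (hD.mem_nhds hzD)).tendsto.comp hpath)
      have htendB : Filter.Tendsto (fun t => dI F₁ (path t) + d1 F₂ (path t))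
          (nhdsWithin 0 (Set.Ioi (0:ℝ))) (nhds (dI F₁ z + d1 F₂ z)) :=
        ((hgB.continuousAt (hD.mem_nhds hzD)).tendsto.comp hpath)
      have hAz : d1 F₁ z - dI F₂ z = 0 :=
        tendsto_nhds_unique (htendA.congr' (hg0.mono fun t ht => ht.1)) tendsto_const_nhds
      have hBz : dI F₁ z + d1 F₂ z = 0 :=
        tendsto_nhds_unique (htendB.congr' (hg0.mono fun t ht => ht.2)) tendsto_const_nhds
      exact ⟨sub_eq_zero.mp hAz, eq_neg_of_add_eq_zero_left hBz⟩
    · exact step2 z hzD him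
end PaperStmt
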